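/- Let S be a finite set of n points in R^2, let k ≥ 1 with n > 3k, and suppose the point x ∈ R^2 has location depth exactly k with respect to S. Then there exists a subset T ⊆ S with exactly 3k points such that x still has location depth k with respect to T. -/

import Mathlib

open Real
open scoped RealInnerProductSpace

noncomputable section
namespace LocDepth


noncomputable def wrap (r : ℝ) : ℝ := r - 2*π*(⌈r/(2*π)⌉ - 1)

lemma two_pi_pos : (0:ℝ) < 2*π := by positivity

lemma wrap_mem (r : ℝ) : wrap r ∈ Set.Ioc 0 (2*π) := by
  have h2π := two_pi_pos
  have h1 : r/(2*π) ≤ ⌈r/(2*π)⌉ := Int.le_ceil _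
  have h2 : (⌈r/(2*π)⌉:ℝ) < r/(2*π) + 1 := Int.ceil_lt_add_one _
  have h1' : r ≤ (⌈r/(2*π)⌉:ℝ) * (2*π) := by
    rw [← div_le_iff₀ h2π] at *; linarith
  have h2' : ((⌈r/(2*π)⌉:ℝ)) * (2*π) < r + 2*π := by
    have := mul_lt_mul_of_pos_right h2 h2π
    calc (⌈r/(2*π)⌉:ℝ) * (2*π) < (r/(2*π)+1) * (2*π) := this
    _ = r + 2*π := by field_simp
  constructor
  · unfold wrap; nlinarith
  · unfold wrap; nlinarith

lemma wrap_sub (r : ℝ) : ∃ m : ℤ, wrap r = r - m * (2*π) :=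
  ⟨⌈r/(2*π)⌉ - 1, by unfold wrap; push_cast; ring⟩

lemma cos_wrap_sub (r c : ℝ) : Real.cos (wrap r - c) = Real.cos (r - c) := by
  obtain ⟨m, hm⟩ := wrap_sub r
  rw [hm, show r - m*(2*π) - c = (r - c) - m*(2*π) by ring, Real.cos_sub_int_mul_two_pi]

lemma cos_sub_wrap (r c : ℝ) : Real.cos (c - wrap r) = Real.cos (c - r) := by
  rw [← Real.cos_neg, neg_sub, cos_wrap_sub, Real.cos_sub, Real.cos_sub]; ring



noncomputable def toC (v : (EuclideanSpace ℝ (Fin 2))) : ℂ := ⟨v 0, v 1⟩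

lemma toC_ne_zero {v : (EuclideanSpace ℝ (Fin 2))} (hv : v ≠ 0) : toC v ≠ 0 := by
  intro h
  apply hv
  have h0 : v 0 = 0 := congrArg Complex.re h
  have h1 : v 1 = 0 := congrArg Complex.im h
  ext i
  fin_cases i <;> simpa

noncomputable def psi (v : (EuclideanSpace ℝ (Fin 2))) : ℝ := Complex.arg (toC v)

lemma inner_eq (u v : (EuclideanSpace ℝ (Fin 2))) : ⟪u, v⟫ = u 0 * v 0 + u 1 * v 1 := by
  simp [PiLp.inner_apply, Fin.sum_univ_two, RCLike.inner_apply, mul_comm]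

lemma inner_eq_cos (u v : (EuclideanSpace ℝ (Fin 2))) (hu : u ≠ 0) (hv : v ≠ 0) :
    ⟪u, v⟫ = ‖toC u‖ * ‖toC v‖ * Real.cos (psi v - psi u) := by
  have hru : ‖toC u‖ ≠ 0 := norm_ne_zero_iff.mpr (toC_ne_zero hu)
  have hrv : ‖toC v‖ ≠ 0 := norm_ne_zero_iff.mpr (toC_ne_zero hv)
  rw [inner_eq, Real.cos_sub, psi, psi, Complex.cos_arg (toC_ne_zero hu),
    Complex.cos_arg (toC_ne_zero hv), Complex.sin_arg, Complex.sin_arg]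
  have h1 : (toC u).re = u 0 := rfl
  have h2 : (toC u).im = u 1 := rfl
  have h3 : (toC v).re = v 0 := rfl
  have h4 : (toC v).im = v 1 := rfl
  rw [h1, h2, h3, h4]
  field_simp

lemma inner_nonneg_iff (u v : (EuclideanSpace ℝ (Fin 2))) (hu : u ≠ 0) (hv : v ≠ 0) :
    0 ≤ ⟪u, v⟫ ↔ 0 ≤ Real.cos (psi v - psi u) := by
  rw [inner_eq_cos u v hu hv]
  have hru : (0:ℝ) < ‖toC u‖ := norm_pos_iff.mpr (toC_ne_zero hu)
  have hrv : (0:ℝ) < ‖toC v‖ := norm_pos_iff.mpr (toC_ne_zero hv)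
  constructor
  · intro h; nlinarith [mul_pos hru hrv]
  · intro h; positivity

noncomputable def uvec (φ : ℝ) : (EuclideanSpace ℝ (Fin 2)) := (EuclideanSpace.equiv (Fin 2) ℝ).symm ![Real.cos φ, Real.sin φ]

lemma uvec_apply0 (φ : ℝ) : uvec φ 0 = Real.cos φ := rfl
lemma uvec_apply1 (φ : ℝ) : uvec φ 1 = Real.sin φ := rfl

lemma uvec_ne_zero (φ : ℝ) : uvec φ ≠ 0 := by
  intro h
  have h0 : Real.cos φ = 0 := by
    have := congrArg (fun v : EuclideanSpace ℝ (Fin 2) => v 0) h; simpa [uvec_apply0] using this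
  have h1 : Real.sin φ = 0 := by
    have := congrArg (fun v : EuclideanSpace ℝ (Fin 2) => v 1) h; simpa [uvec_apply1] using this
  have := Real.sin_sq_add_cos_sq φ
  rw [h0, h1] at this; norm_num at this

lemma inner_uvec (φ : ℝ) (v : (EuclideanSpace ℝ (Fin 2))) (hv : v ≠ 0) :
    ⟪uvec φ, v⟫ = ‖toC v‖ * Real.cos (psi v - φ) := by
  have hrv : ‖toC v‖ ≠ 0 := norm_ne_zero_iff.mpr (toC_ne_zero hv)
  rw [inner_eq, Real.cos_sub, psi, Complex.cos_arg (toC_ne_zero hv), Complex.sin_arg]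
  rw [uvec_apply0, uvec_apply1]
  have h3 : (toC v).re = v 0 := rfl
  have h4 : (toC v).im = v 1 := rfl
  rw [h3, h4]
  field_simp

lemma inner_uvec_nonneg_iff (φ : ℝ) (v : (EuclideanSpace ℝ (Fin 2))) (hv : v ≠ 0) :
    0 ≤ ⟪uvec φ, v⟫ ↔ 0 ≤ Real.cos (psi v - φ) := by
  rw [inner_uvec φ v hv]
  have hrv : (0:ℝ) < ‖toC v‖ := norm_pos_iff.mpr (toC_ne_zero hv)
  constructor
  · intro h; nlinarith
  · intro h; positivity


/-- wrap into (-π, π] -/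
noncomputable def wrapPi (r : ℝ) : ℝ := r - 2*π*⌈(r-π)/(2*π)⌉

lemma wrapPi_mem (r : ℝ) : wrapPi r ∈ Set.Ioc (-π) π := by
  have h2π : (0:ℝ) < 2*π := by positivity
  have h1 : (r-π)/(2*π) ≤ ⌈(r-π)/(2*π)⌉ := Int.le_ceil _
  have h2 : (⌈(r-π)/(2*π)⌉:ℝ) < (r-π)/(2*π) + 1 := Int.ceil_lt_add_one _
  have h1' : r - π ≤ (⌈(r-π)/(2*π)⌉:ℝ) * (2*π) := by
    rw [← div_le_iff₀ h2π]; linarith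
  have h2' : ((⌈(r-π)/(2*π)⌉:ℝ)) * (2*π) < r - π + 2*π := by
    have := mul_lt_mul_of_pos_right h2 h2π
    calc (⌈(r-π)/(2*π)⌉:ℝ) * (2*π) < ((r-π)/(2*π)+1) * (2*π) := this
    _ = r - π + 2*π := by field_simp
  constructor
  · unfold wrapPi; nlinarith
  · unfold wrapPi; nlinarith

lemma wrapPi_sub (r : ℝ) : ∃ m : ℤ, wrapPi r = r - m * (2*π) :=
  ⟨⌈(r-π)/(2*π)⌉, by unfold wrapPi; push_cast; ring⟩

lemma cos_wrapPi (r : ℝ) : Real.cos (wrapPi r) = Real.cos r := by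
  obtain ⟨m, hm⟩ := wrapPi_sub r
  rw [hm, Real.cos_sub_int_mul_two_pi]

lemma cos_nonneg_iff_wrapPi (r : ℝ) : 0 ≤ Real.cos r ↔ |wrapPi r| ≤ π/2 := by
  rw [← cos_wrapPi]
  obtain ⟨hlo, hhi⟩ := wrapPi_mem r
  constructor
  · intro h
    by_contra hab
    rw [abs_le, not_and_or] at hab
    rcases hab with hab | hab
    · push_neg at hab
      have : Real.cos (wrapPi r) < 0 := by
        rw [← Real.cos_neg]
        exact Real.cos_neg_of_pi_div_two_lt_of_lt (by linarith) (by linarith)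
      linarith
    · push_neg at hab
      have : Real.cos (wrapPi r) < 0 :=
        Real.cos_neg_of_pi_div_two_lt_of_lt hab (by linarith [Real.pi_pos])
      linarith
  · intro h
    rw [abs_le] at h
    exact Real.cos_nonneg_of_mem_Icc ⟨by linarith [h.1], h.2⟩

/-- membership of angle `t` in the half-open semicircle `(b, b+π]` mod 2π,
for `b, t ∈ (0, 2π]`. -/
def Mem (b t : ℝ) : Prop := (b < t ∧ t ≤ b + π) ∨ t ≤ b - π

lemma mem_of_cos (b t ε : ℝ) (hb : b ∈ Set.Ioc 0 (2*π)) (ht : t ∈ Set.Ioc 0 (2*π))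
    (hε : 0 < ε) (hεπ : ε < π/2)
    (h1 : ¬ (b + π < t ∧ t ≤ b + π + ε))
    (h2 : ¬ (b - π < t ∧ t ≤ b - π + ε))
    (hcos : 0 ≤ Real.cos (t - (b + ε + π/2))) : Mem b t := by
  have hπ := Real.pi_pos
  rw [cos_nonneg_iff_wrapPi] at hcos
  set δ : ℝ := t - (b + ε + π/2) with hδ
  obtain ⟨m, hm⟩ := wrapPi_sub δ
  obtain ⟨hwlo, hwhi⟩ := wrapPi_mem δ
  rw [abs_le] at hcos
  have hδlo : -(3*π) + -ε < δ := by
    have := ht.1; have := hb.2; simp only [hδ]; linarith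
  have hδhi : δ < 2*π := by
    have := ht.2; have := hb.1; simp only [hδ]; linarith
  -- determine m ∈ {-1, 0, 1}
  have hmlo : -2 < (m:ℝ) := by nlinarith [hm, hcos.1, hcos.2]
  have hmhi : (m:ℝ) < 2 := by nlinarith [hm, hcos.1, hcos.2]
  have hm2 : -2 < m := by exact_mod_cast hmlo
  have hm3 : m < 2 := by exact_mod_cast hmhi
  interval_cases m
  · -- m = -1 : δ ∈ [-5π/2, -3π/2]
    norm_num at hm
    have hd1 : δ ≤ -(3*π/2) + 0 := by
      have h' := hcos.2; rw [hm] at h'; linarith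
    have : t ≤ b - π + ε := by simp only [hδ] at hd1; linarith
    right
    by_contra hcon
    push_neg at hcon
    exact h2 ⟨by linarith, this⟩
  · -- m = 0 : δ ∈ [-π/2, π/2]
    norm_num at hm
    have hd1 : -(π/2) ≤ δ := by have h' := hcos.1; rw [hm] at h'; linarith
    have hd2 : δ ≤ π/2 := by have h' := hcos.2; rw [hm] at h'; linarith
    have hl : b + ε ≤ t := by simp only [hδ] at hd1; linarith
    have hr : t ≤ b + π + ε := by simp only [hδ] at hd2; linarith
    left
    constructor
    · linarith
    · by_contra hcon
      push_neg at hcon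
      exact h1 ⟨hcon, hr⟩
  · -- m = 1 : δ ≥ 3π/2, so t > 2π, contradiction
    norm_num at hm
    have hd1 : 3*π/2 ≤ δ := by have h' := hcos.1; rw [hm] at h'; linarith
    exfalso
    have := ht.2; have := hb.1
    simp only [hδ] at hd1; linarith

lemma cos_of_mem (b t : ℝ) (hb : b ∈ Set.Ioc 0 (2*π)) (ht : t ∈ Set.Ioc 0 (2*π))
    (h : Mem b t) : 0 ≤ Real.cos (t - (b + π/2)) := by
  have hπ := Real.pi_pos
  rcases h with ⟨h1, h2⟩ | h1
  · exact Real.cos_nonneg_of_mem_Icc ⟨by linarith, by linarith⟩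
  · have : Real.cos (t - (b + π/2)) = Real.cos (t - (b + π/2) + 2*π) := by
      rw [Real.cos_add_two_pi]
    rw [this]
    refine Real.cos_nonneg_of_mem_Icc ⟨?_, ?_⟩
    · have := ht.1; have := hb.2; linarith
    · linarith


lemma exists_sorted {α : Type*} [DecidableEq α] (θ : α → ℝ) (C : Finset α) :
    ∃ l : List α, l.Nodup ∧ l.toFinset = C ∧ l.Pairwise (fun a b => θ a ≤ θ b) := by
  induction C using Finset.strongInductionOn with
  | _ C ih =>
    rcases C.eq_empty_or_nonempty with rfl | hne
    · exact ⟨[], by simp, by simp, by simp⟩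
    · obtain ⟨m, hm, hmin⟩ := C.exists_min_image θ hne
      obtain ⟨l, hnd, hfs, hs⟩ := ih (C.erase m) (Finset.erase_ssubset hm)
      refine ⟨m :: l, ?_, ?_, ?_⟩
      · rw [List.nodup_cons]
        refine ⟨fun hmem => ?_, hnd⟩
        have : m ∈ C.erase m := by rw [← hfs]; exact List.mem_toFinset.mpr hmem
        exact (Finset.notMem_erase m C) this
      · rw [List.toFinset_cons, hfs, Finset.insert_erase hm]
      · rw [List.pairwise_cons]
        refine ⟨fun b hb => ?_, hs⟩
        have : b ∈ C.erase m := by rw [← hfs]; exact List.mem_toFinset.mpr hb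
        exact hmin b (Finset.mem_of_mem_erase this)

lemma sorted_rel {α : Type*} {θ : α → ℝ} {l : List α}
    (hs : l.Pairwise (fun a b => θ a ≤ θ b)) {i j : ℕ} (hij : i ≤ j) (hj : j < l.length) :
    θ (l.get ⟨i, lt_of_le_of_lt hij hj⟩) ≤ θ (l.get ⟨j, hj⟩) := by
  rcases eq_or_lt_of_le hij with rfl | hlt
  · exact le_refl _
  · exact List.pairwise_iff_get.mp hs ⟨i, _⟩ ⟨j, _⟩ hlt

/-- at least `i+1` elements of a sorted list have key `≤` the key of position `i`. -/
lemma sorted_prefix_card {α : Type*} [DecidableEq α] {θ : α → ℝ} {l : List α}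
    (hnd : l.Nodup) (hs : l.Pairwise (fun a b => θ a ≤ θ b)) {i : ℕ} (hi : i < l.length) :
    i + 1 ≤ (l.toFinset.filter (fun s => θ s ≤ θ (l.get ⟨i, hi⟩))).card := by
  classical
  have : (Finset.range (i+1)).card ≤
      (l.toFinset.filter (fun s => θ s ≤ θ (l.get ⟨i, hi⟩))).card := by
    apply Finset.card_le_card_of_injOn (fun j => l.getD j (l.get ⟨i, hi⟩))
    · intro j hj
      rw [Finset.mem_coe, Finset.mem_range] at hj
      have hjl : j < l.length := lt_of_lt_of_le hj hi
      simp only [Finset.mem_coe]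
      rw [List.getD_eq_getElem _ _ hjl]
      rw [Finset.mem_filter, List.mem_toFinset]
      exact ⟨List.getElem_mem _, by
        have := sorted_rel hs (Nat.lt_succ_iff.mp hj) hi
        simpa using this⟩
    · intro a ha b hb hab
      rw [Finset.coe_range, Set.mem_Iio] at ha hb
      have hal : a < l.length := lt_of_lt_of_le ha hi
      have hbl : b < l.length := lt_of_lt_of_le hb hi
      simp only [] at hab
      rw [List.getD_eq_getElem _ _ hal, List.getD_eq_getElem _ _ hbl] at hab
      have h2 := List.nodup_iff_injective_get.mp hnd
        (show l.get ⟨a, hal⟩ = l.get ⟨b, hbl⟩ from hab)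
      simpa using congrArg Fin.val h2
  simpa using this

/-- if at least `i+1` elements have key `≤ v`, then position `i` has key `≤ v`. -/
lemma sorted_get_le {α : Type*} [DecidableEq α] {θ : α → ℝ} {l : List α}
    (hnd : l.Nodup) (hs : l.Pairwise (fun a b => θ a ≤ θ b)) {i : ℕ} (hi : i < l.length)
    {v : ℝ} (hcard : i + 1 ≤ (l.toFinset.filter (fun s => θ s ≤ v)).card) :
    θ (l.get ⟨i, hi⟩) ≤ v := by
  classical
  by_contra hcon
  push_neg at hcon
  have hsub : (l.toFinset.filter (fun s => θ s ≤ v)).card ≤ (Finset.range i).card := by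
    apply Finset.card_le_card_of_injOn (fun s => l.idxOf s)
    · intro s hsmem
      rw [Finset.mem_coe, Finset.mem_filter, List.mem_toFinset] at hsmem
      obtain ⟨hsl, hsv⟩ := hsmem
      have hidx : l.idxOf s < l.length := List.idxOf_lt_length_iff.mpr hsl
      rw [Finset.mem_coe, Finset.mem_range]
      by_contra hge
      push_neg at hge
      have : θ (l.get ⟨i, hi⟩) ≤ θ (l.get ⟨l.idxOf s, hidx⟩) := sorted_rel hs hge hidx
      rw [List.idxOf_get] at this
      linarith
    · intro a ha b hb hab
      rw [Finset.mem_coe, Finset.mem_filter, List.mem_toFinset] at ha hb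
      have ha' : l.idxOf a < l.length := List.idxOf_lt_length_iff.mpr ha.1
      have hb' : l.idxOf b < l.length := List.idxOf_lt_length_iff.mpr hb.1
      have : l.get ⟨l.idxOf a, ha'⟩ = l.get ⟨l.idxOf b, hb'⟩ := by
        congr 1
        exact Fin.ext hab
      rwa [List.idxOf_get, List.idxOf_get] at this
  rw [Finset.card_range] at hsub
  omega

end LocDepth
end

set_option maxHeartbeats 4000000 in
open Real LocDepth in
/-- If `x` has location depth exactly `k` with respect to a set `S` of
`n > 3k` points in the plane, then there is a subset `T ⊆ S` of exactly `3k`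
points such that `x` still has location depth `k` with respect to `T`. -/
theorem location_depth_subset_three_k
    (n k : ℕ) (hk : 1 ≤ k) (hn : 3 * k < n)
    (S : Finset (EuclideanSpace ℝ (Fin 2))) (hcard : S.card = n)
    (x : EuclideanSpace ℝ (Fin 2))
    (hdepth_ge : ∀ (u : EuclideanSpace ℝ (Fin 2)), u ≠ 0 →
      k ≤ {s : EuclideanSpace ℝ (Fin 2) | s ∈ S ∧ 0 ≤ ⟪u, s - x⟫}.ncard)
    (hdepth_eq : ∃ u : EuclideanSpace ℝ (Fin 2), u ≠ 0 ∧
      {s : EuclideanSpace ℝ (Fin 2) | s ∈ S ∧ 0 ≤ ⟪u, s - x⟫}.ncard = k) :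
    ∃ T : Finset (EuclideanSpace ℝ (Fin 2)), T ⊆ S ∧ T.card = 3 * k ∧
      (∀ (u : EuclideanSpace ℝ (Fin 2)), u ≠ 0 →
        k ≤ {s : EuclideanSpace ℝ (Fin 2) | s ∈ T ∧ 0 ≤ ⟪u, s - x⟫}.ncard) ∧
      (∃ u : EuclideanSpace ℝ (Fin 2), u ≠ 0 ∧
        {s : EuclideanSpace ℝ (Fin 2) | s ∈ T ∧ 0 ≤ ⟪u, s - x⟫}.ncard = k) := by
  classical
  have hπ := Real.pi_pos
  have hπ3 := Real.pi_gt_three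
  obtain ⟨u0, hu0ne, hu0k⟩ := hdepth_eq
  -- conversion from ncard to Finset.card
  have hset : ∀ (T : Finset (EuclideanSpace ℝ (Fin 2))) (u : EuclideanSpace ℝ (Fin 2)),
      {s : EuclideanSpace ℝ (Fin 2) | s ∈ T ∧ 0 ≤ ⟪u, s - x⟫}.ncard
      = (T.filter (fun s => 0 ≤ ⟪u, s - x⟫)).card := by
    intro T u
    rw [← Set.ncard_coe_finset]
    congr 1
    ext s
    simp [Finset.mem_filter]
  set α0 : ℝ := psi u0 with hα0
  set θ : EuclideanSpace ℝ (Fin 2) → ℝ := fun s => wrap (psi (s - x) - α0 + π/2) with hθ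
  have hθmem : ∀ s, θ s ∈ Set.Ioc 0 (2*π) := fun s => wrap_mem _
  have θcos : ∀ (s : EuclideanSpace ℝ (Fin 2)) (r : ℝ),
      Real.cos (θ s - r) = Real.cos (psi (s - x) - (α0 - π/2 + r)) := by
    intro s r
    simp only [hθ]
    obtain ⟨ms, hms⟩ := wrap_sub (psi (s - x) - α0 + π/2)
    rw [hms, show psi (s-x) - α0 + π/2 - ms*(2*π) - r
        = (psi (s-x) - (α0 - π/2 + r)) - ms*(2*π) by ring,
      Real.cos_sub_int_mul_two_pi]
  set c : ℕ := if x ∈ S then 1 else 0 with hcdef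
  have hc1 : c ≤ 1 := by simp only [hcdef]; split <;> omega
  have hck : c ≤ k := le_trans hc1 hk
  set k' : ℕ := k - c with hk'def
  have hkc : k = k' + c := by omega
  set S' : Finset (EuclideanSpace ℝ (Fin 2)) := S.erase x with hS'def
  have hS'sub : S' ⊆ S := Finset.erase_subset _ _
  have hxS' : x ∉ S' := Finset.notMem_erase _ _
  have hS'card : S'.card + c = n := by
    simp only [hS'def, hcdef]
    by_cases hx : x ∈ S
    · rw [if_pos hx, Finset.card_erase_of_mem hx]; omega
    · rw [if_neg hx, Finset.erase_eq_of_notMem hx]; omega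
  have hsx : ∀ s ∈ S', s - x ≠ 0 := by
    intro s hs
    have : s ≠ x := Finset.ne_of_mem_erase hs
    exact sub_ne_zero.mpr this
  -- splitting the count at x
  have hsplit : ∀ (P : EuclideanSpace ℝ (Fin 2) → Prop) (inst : DecidablePred P), P x →
      (S.filter P).card = (S'.filter P).card + c := by
    intro P inst hPx
    by_cases hx : x ∈ S
    · have hc : c = 1 := by simp [hcdef, hx]
      have heq : S.filter P = insert x (S'.filter P) := by
        ext s
        simp only [Finset.mem_filter, Finset.mem_insert, hS'def, Finset.mem_erase]
        constructor
        · rintro ⟨hsS, hsP⟩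
          by_cases hsxx : s = x
          · exact Or.inl hsxx
          · exact Or.inr ⟨⟨hsxx, hsS⟩, hsP⟩
        · rintro (rfl | ⟨⟨_, hsS⟩, hsP⟩)
          · exact ⟨hx, hPx⟩
          · exact ⟨hsS, hsP⟩
      rw [heq, Finset.card_insert_of_notMem (by
        simp only [Finset.mem_filter, hS'def, Finset.mem_erase]
        rintro ⟨⟨hne, _⟩, _⟩
        exact hne rfl), hc]
    · have hc : c = 0 := by simp [hcdef, hx]
      have heq : S' = S := by simp only [hS'def]; exact Finset.erase_eq_of_notMem hx
      rw [heq, hc, add_zero]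
  have hinnerx : ∀ u : EuclideanSpace ℝ (Fin 2), (0:ℝ) ≤ ⟪u, x - x⟫ := by
    intro u; simp
  -- half-open semicircle counting lemma
  have hHO : ∀ b : ℝ, b ∈ Set.Ioc 0 (2*π) →
      k' ≤ (S'.filter (fun s => Mem b (θ s))).card := by
    intro b hb
    set F : Finset ℝ := insert 1 (((S'.image (fun s => θ s - (b+π))) ∪
      (S'.image (fun s => θ s - (b-π)))).filter (fun d => 0 < d)) with hF
    have hFne : F.Nonempty := ⟨1, Finset.mem_insert_self _ _⟩
    set ε : ℝ := F.min' hFne / 2 with hεdef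
    have hFpos : ∀ d ∈ F, 0 < d := by
      intro d hd
      rcases Finset.mem_insert.mp hd with rfl | hd
      · norm_num
      · exact (Finset.mem_filter.mp hd).2
    have hminpos : 0 < F.min' hFne := hFpos _ (F.min'_mem hFne)
    have hεpos : 0 < ε := by simp only [hεdef]; linarith
    have hε1 : ε ≤ 1/2 := by
      have : F.min' hFne ≤ 1 := Finset.min'_le _ _ (Finset.mem_insert_self _ _)
      simp only [hεdef]; linarith
    have hεπ : ε < π/2 := by linarith
    have hεavoid : ∀ s ∈ S', ∀ v : ℝ, ((θ s - v ∈ F) ∨ ¬ (0 < θ s - v)) →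
        ¬ (v < θ s ∧ θ s ≤ v + ε) := by
      intro s hs v hv
      rintro ⟨h1, h2⟩
      rcases hv with hv | hv
      · have := Finset.min'_le _ _ hv
        have : θ s - v ≥ F.min' hFne := this
        simp only [hεdef] at h2
        linarith
      · exact hv (by linarith)
    -- apply depth hypothesis in direction b + ε + α0
    have hdg := hdepth_ge (uvec ((b + ε) + α0)) (uvec_ne_zero _)
    rw [hset S _] at hdg
    rw [hsplit (fun s => 0 ≤ ⟪uvec ((b + ε) + α0), s - x⟫) (fun _ => inferInstance)
      (hinnerx _)] at hdg
    have hk'le : k' ≤ (S'.filter (fun s => 0 ≤ ⟪uvec ((b + ε) + α0), s - x⟫)).card := by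
      omega
    refine le_trans hk'le (Finset.card_le_card ?_)
    intro s hs
    rw [Finset.mem_filter] at hs ⊢
    refine ⟨hs.1, ?_⟩
    have hcos : 0 ≤ Real.cos (θ s - (b + ε + π/2)) := by
      have h' := (inner_uvec_nonneg_iff ((b + ε) + α0) (s - x) (hsx s hs.1)).mp hs.2
      rw [θcos s (b + ε + π/2), show α0 - π/2 + (b + ε + π/2) = (b + ε) + α0 by ring]
      exact h'
    refine mem_of_cos b (θ s) ε hb (hθmem s) hεpos hεπ ?_ ?_ hcos
    · -- avoid (b+π, b+π+ε]
      have := hεavoid s hs.1 (b+π) ?_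
      · intro hcon; exact this ⟨hcon.1, hcon.2⟩
      · by_cases hpos : 0 < θ s - (b+π)
        · left
          refine Finset.mem_insert_of_mem (Finset.mem_filter.mpr ⟨?_, hpos⟩)
          exact Finset.mem_union_left _ (Finset.mem_image_of_mem _ hs.1)
        · exact Or.inr hpos
    · -- avoid (b-π, b-π+ε]
      have := hεavoid s hs.1 (b-π) ?_
      · intro hcon; exact this ⟨hcon.1, hcon.2⟩
      · by_cases hpos : 0 < θ s - (b-π)
        · left
          refine Finset.mem_insert_of_mem (Finset.mem_filter.mpr ⟨?_, hpos⟩)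
          exact Finset.mem_union_right _ (Finset.mem_image_of_mem _ hs.1)
        · exact Or.inr hpos
  -- tight halfspace: membership for u0 in terms of θ
  have hu0mem : ∀ s ∈ S', ((0:ℝ) ≤ ⟪u0, s - x⟫ ↔ 0 ≤ Real.cos (θ s - π/2)) := by
    intro s hs
    rw [inner_nonneg_iff u0 (s - x) hu0ne (hsx s hs), θcos s (π/2),
      show α0 - π/2 + π/2 = α0 by ring, hα0]
  have hSfk : (S.filter (fun s => 0 ≤ ⟪u0, s - x⟫)).card = k := by
    rw [← hset S u0]; exact hu0k
  have hS'fk : (S'.filter (fun s => 0 ≤ ⟪u0, s - x⟫)).card = k' := by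
    have := hsplit (fun s => 0 ≤ ⟪u0, s - x⟫) (fun _ => inferInstance) (hinnerx u0)
    omega
  -- the tight group G1 and the rest B
  set G1 : Finset (EuclideanSpace ℝ (Fin 2)) := S'.filter (fun s => θ s ≤ π) with hG1def
  set B : Finset (EuclideanSpace ℝ (Fin 2)) := S'.filter (fun s => ¬ (θ s ≤ π)) with hBdef
  have hG1card : G1.card = k' := by
    apply le_antisymm
    · refine le_trans (Finset.card_le_card ?_) (le_of_eq hS'fk)
      intro s hs
      rw [hG1def, Finset.mem_filter] at hs
      rw [Finset.mem_filter]
      refine ⟨hs.1, ?_⟩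
      rw [hu0mem s hs.1]
      refine Real.cos_nonneg_of_mem_Icc ⟨?_, ?_⟩
      · have := (hθmem s).1; linarith
      · linarith [hs.2]
    · refine le_trans (hHO (2*π) ⟨Real.two_pi_pos, le_refl _⟩) (Finset.card_le_card ?_)
      intro s hs
      rw [Finset.mem_filter] at hs
      rw [hG1def, Finset.mem_filter]
      refine ⟨hs.1, ?_⟩
      rcases hs.2 with ⟨h1, _⟩ | h1
      · exact absurd h1 (not_lt.mpr (hθmem s).2)
      · linarith
  have hGBcard : G1.card + B.card = S'.card := Finset.card_filter_add_card_filter_not _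
  set nB : ℕ := B.card with hnBdef
  have hnB : 2*k' + 2*c + 1 ≤ nB := by omega
  -- sorted lists
  obtain ⟨lg, hlgnd, hlgfs, hlgs⟩ := exists_sorted θ G1
  obtain ⟨lB, hlBnd, hlBfs, hlBs⟩ := exists_sorted θ B
  have hlglen : lg.length = k' := by
    rw [← hG1card, ← hlgfs, List.toFinset_card_of_nodup hlgnd]
  have hlBlen : lB.length = nB := by
    rw [hnBdef, ← hlBfs, List.toFinset_card_of_nodup hlBnd]
  set g : Fin k' → EuclideanSpace ℝ (Fin 2) :=
    fun i => lg.get ⟨i, by rw [hlglen]; exact i.2⟩ with hgdef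
  set f : Fin k' → EuclideanSpace ℝ (Fin 2) :=
    fun i => lB.get ⟨i, by rw [hlBlen]; omega⟩ with hfdef
  set h : Fin k' → EuclideanSpace ℝ (Fin 2) :=
    fun i => lB.get ⟨nB - k' + i, by rw [hlBlen]; omega⟩ with hhdef
  have hgG1 : ∀ i, g i ∈ G1 := by
    intro i
    rw [← hlgfs, List.mem_toFinset]
    simp only [hgdef]
    exact lg.get_mem _
  have hfB : ∀ i, f i ∈ B := by
    intro i; rw [← hlBfs, List.mem_toFinset]; simp only [hfdef]; exact lB.get_mem _
  have hhB : ∀ i, h i ∈ B := by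
    intro i; rw [← hlBfs, List.mem_toFinset]; simp only [hhdef]; exact lB.get_mem _
  have hgS' : ∀ i, g i ∈ S' := fun i => (Finset.mem_filter.mp (hgG1 i)).1
  have hfS' : ∀ i, f i ∈ S' := fun i => (Finset.mem_filter.mp (hfB i)).1
  have hhS' : ∀ i, h i ∈ S' := fun i => (Finset.mem_filter.mp (hhB i)).1
  have hgθ : ∀ i, 0 < θ (g i) ∧ θ (g i) ≤ π :=
    fun i => ⟨(hθmem _).1, (Finset.mem_filter.mp (hgG1 i)).2⟩
  have hfθ : ∀ i, π < θ (f i) ∧ θ (f i) ≤ 2*π :=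
    fun i => ⟨not_le.mp (Finset.mem_filter.mp (hfB i)).2, (hθmem _).2⟩
  have hhθ : ∀ i, π < θ (h i) ∧ θ (h i) ≤ 2*π :=
    fun i => ⟨not_le.mp (Finset.mem_filter.mp (hhB i)).2, (hθmem _).2⟩
  -- elementwise inequalities
  have hP2 : ∀ i : Fin k', θ (f i) ≤ θ (g i) + π := by
    intro i
    have hgi : 0 < θ (g i) ∧ θ (g i) ≤ π := hgθ i
    have hbIoc : θ (g i) ∈ Set.Ioc 0 (2*π) := hθmem _
    have hHOb := hHO (θ (g i)) hbIoc
    have e1 : ((S'.filter (fun s => Mem (θ (g i)) (θ s))).filter (fun s => θ s ≤ π)).card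
        + ((S'.filter (fun s => Mem (θ (g i)) (θ s))).filter (fun s => ¬ θ s ≤ π)).card
        = (S'.filter (fun s => Mem (θ (g i)) (θ s))).card :=
      Finset.card_filter_add_card_filter_not _
    have e2 : (S'.filter (fun s => Mem (θ (g i)) (θ s))).filter (fun s => θ s ≤ π)
        = G1.filter (fun s => Mem (θ (g i)) (θ s)) := by
      rw [hG1def, Finset.filter_comm]
    have e3 : (S'.filter (fun s => Mem (θ (g i)) (θ s))).filter (fun s => ¬ θ s ≤ π)
        = B.filter (fun s => Mem (θ (g i)) (θ s)) := by
      rw [hBdef, Finset.filter_comm]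
    have hG1b : G1.filter (fun s => Mem (θ (g i)) (θ s))
        ⊆ G1.filter (fun s => ¬ (θ s ≤ θ (g i))) := by
      intro s hs
      rw [Finset.mem_filter] at hs ⊢
      refine ⟨hs.1, ?_⟩
      have hsθ := hθmem s
      rcases hs.2 with ⟨h1, _⟩ | h1
      · exact not_le.mpr h1
      · exfalso; have := hsθ.1; linarith [hgi.2]
    have e4 : (G1.filter (fun s => θ s ≤ θ (g i))).card
        + (G1.filter (fun s => ¬ θ s ≤ θ (g i))).card = G1.card :=
      Finset.card_filter_add_card_filter_not _
    have hgeq : g i = lg.get ⟨(i:ℕ), by rw [hlglen]; exact i.2⟩ := by simp only [hgdef]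
    have hprefix : (i:ℕ) + 1 ≤ (G1.filter (fun s => θ s ≤ θ (g i))).card := by
      have := sorted_prefix_card hlgnd hlgs (i := (i:ℕ)) (by rw [hlglen]; exact i.2)
      rw [hlgfs] at this
      rw [hgeq]
      exact this
    have hBsub : B.filter (fun s => Mem (θ (g i)) (θ s))
        ⊆ B.filter (fun s => θ s ≤ θ (g i) + π) := by
      intro s hs
      rw [Finset.mem_filter] at hs ⊢
      refine ⟨hs.1, ?_⟩
      have hsθ := hθmem s
      rcases hs.2 with ⟨_, h2⟩ | h1
      · exact h2
      · exfalso; have := hsθ.1; linarith [hgi.2]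
    have hBcount : (i:ℕ) + 1 ≤ (B.filter (fun s => θ s ≤ θ (g i) + π)).card := by
      have c1 := Finset.card_le_card hG1b
      have c2 := Finset.card_le_card hBsub
      rw [e2, e3] at e1
      have hik : (i:ℕ) < k' := i.2
      omega
    have hfeq : f i = lB.get ⟨(i:ℕ), by rw [hlBlen]; omega⟩ := by simp only [hfdef]
    rw [hfeq]
    apply sorted_get_le hlBnd hlBs (by rw [hlBlen]; omega)
    rw [hlBfs]
    exact hBcount
  have hP3 : ∀ i : Fin k', θ (g i) + π ≤ θ (h i) := by
    intro i
    have hhi : π < θ (h i) ∧ θ (h i) ≤ 2*π := hhθ i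
    have hbIoc : θ (h i) ∈ Set.Ioc 0 (2*π) := hθmem _
    have hHOb := hHO (θ (h i)) hbIoc
    have e1 : ((S'.filter (fun s => Mem (θ (h i)) (θ s))).filter (fun s => θ s ≤ π)).card
        + ((S'.filter (fun s => Mem (θ (h i)) (θ s))).filter (fun s => ¬ θ s ≤ π)).card
        = (S'.filter (fun s => Mem (θ (h i)) (θ s))).card :=
      Finset.card_filter_add_card_filter_not _
    have e2 : (S'.filter (fun s => Mem (θ (h i)) (θ s))).filter (fun s => θ s ≤ π)
        = G1.filter (fun s => Mem (θ (h i)) (θ s)) := by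
      rw [hG1def, Finset.filter_comm]
    have e3 : (S'.filter (fun s => Mem (θ (h i)) (θ s))).filter (fun s => ¬ θ s ≤ π)
        = B.filter (fun s => Mem (θ (h i)) (θ s)) := by
      rw [hBdef, Finset.filter_comm]
    have hBb : B.filter (fun s => Mem (θ (h i)) (θ s))
        ⊆ B.filter (fun s => ¬ (θ s ≤ θ (h i))) := by
      intro s hs
      rw [Finset.mem_filter] at hs ⊢
      refine ⟨hs.1, ?_⟩
      have hsB : ¬ (θ s ≤ π) := by
        have := Finset.mem_filter.mp hs.1
        rw [hBdef, Finset.mem_filter] at hs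
        exact hs.1.2
      rcases hs.2 with ⟨h1, _⟩ | h1
      · exact not_le.mpr h1
      · exfalso; push_neg at hsB; linarith [hhi.2]
    have e5 : (B.filter (fun s => θ s ≤ θ (h i))).card
        + (B.filter (fun s => ¬ θ s ≤ θ (h i))).card = B.card :=
      Finset.card_filter_add_card_filter_not _
    have hheq : h i = lB.get ⟨nB - k' + (i:ℕ), by rw [hlBlen]; omega⟩ := by simp only [hhdef]
    have hprefix : (nB - k' + (i:ℕ)) + 1 ≤ (B.filter (fun s => θ s ≤ θ (h i))).card := by
      have := sorted_prefix_card hlBnd hlBs (i := nB - k' + (i:ℕ)) (by rw [hlBlen]; omega)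
      rw [hlBfs] at this
      rw [hheq]
      exact this
    have hG1sub : G1.filter (fun s => Mem (θ (h i)) (θ s))
        ⊆ G1.filter (fun s => θ s ≤ θ (h i) - π) := by
      intro s hs
      rw [Finset.mem_filter] at hs ⊢
      refine ⟨hs.1, ?_⟩
      have hsG : θ s ≤ π := by
        rw [hG1def, Finset.mem_filter] at hs
        exact hs.1.2
      rcases hs.2 with ⟨h1, _⟩ | h1
      · exfalso; linarith [hhi.1]
      · exact h1
    have hGcount : (i:ℕ) + 1 ≤ (G1.filter (fun s => θ s ≤ θ (h i) - π)).card := by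
      have c1 := Finset.card_le_card hBb
      have c2 := Finset.card_le_card hG1sub
      rw [e2, e3] at e1
      have hi2 : (i:ℕ) < k' := i.2
      omega
    have hgeq : g i = lg.get ⟨(i:ℕ), by rw [hlglen]; exact i.2⟩ := by simp only [hgdef]
    have : θ (g i) ≤ θ (h i) - π := by
      rw [hgeq]
      apply sorted_get_le hlgnd hlgs (by rw [hlglen]; exact i.2)
      rw [hlgfs]
      exact hGcount
    linarith
  -- injectivity of the three selections
  have hginj : Function.Injective g := by
    intro i j hij
    simp only [hgdef] at hij
    have h2 := List.nodup_iff_injective_get.mp hlgnd hij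
    have h3 := congrArg Fin.val h2
    simp only at h3
    exact Fin.ext h3
  have hfinj : Function.Injective f := by
    intro i j hij
    simp only [hfdef] at hij
    have h2 := List.nodup_iff_injective_get.mp hlBnd hij
    have h3 := congrArg Fin.val h2
    simp only at h3
    exact Fin.ext h3
  have hhinj : Function.Injective h := by
    intro i j hij
    simp only [hhdef] at hij
    have h2 := List.nodup_iff_injective_get.mp hlBnd hij
    have h3 := congrArg Fin.val h2
    simp only at h3
    have : (i:ℕ) = (j:ℕ) := by omega
    exact Fin.ext this
  have hfh : ∀ i j : Fin k', f i ≠ h j := by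
    intro i j heq
    simp only [hfdef, hhdef] at heq
    have h2 := List.nodup_iff_injective_get.mp hlBnd heq
    have h3 := congrArg Fin.val h2
    simp only at h3
    have hi2 : (i:ℕ) < k' := i.2
    omega
  have hgf : ∀ i j : Fin k', g i ≠ f j := by
    intro i j heq
    have := (hgθ i).2
    rw [heq] at this
    linarith [(hfθ j).1]
  have hgh : ∀ i j : Fin k', g i ≠ h j := by
    intro i j heq
    have := (hgθ i).2
    rw [heq] at this
    linarith [(hhθ j).1]
  -- assemble the witness set
  set X : Finset (EuclideanSpace ℝ (Fin 2)) := S.filter (fun s => s = x) with hXdef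
  have hXcard : X.card = c := by
    simp only [hXdef, hcdef]
    by_cases hx : x ∈ S
    · rw [if_pos hx]
      have : S.filter (fun s => s = x) = {x} := by
        ext s
        simp only [Finset.mem_filter, Finset.mem_singleton]
        constructor
        · exact fun hp => hp.2
        · rintro rfl; exact ⟨hx, rfl⟩
      rw [this, Finset.card_singleton]
    · rw [if_neg hx]
      have : S.filter (fun s => s = x) = ∅ := by
        ext s
        simp only [Finset.mem_filter, Finset.notMem_empty, iff_false, not_and]
        rintro hs rfl; exact hx hs
      rw [this]; rfl
  set IG : Finset (EuclideanSpace ℝ (Fin 2)) := Finset.univ.image g with hIGdef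
  set IF : Finset (EuclideanSpace ℝ (Fin 2)) := Finset.univ.image f with hIFdef
  set IH : Finset (EuclideanSpace ℝ (Fin 2)) := Finset.univ.image h with hIHdef
  have hIGcard : IG.card = k' := by
    rw [hIGdef, Finset.card_image_of_injective _ hginj, Finset.card_univ, Fintype.card_fin]
  have hIFcard : IF.card = k' := by
    rw [hIFdef, Finset.card_image_of_injective _ hfinj, Finset.card_univ, Fintype.card_fin]
  have hIHcard : IH.card = k' := by
    rw [hIHdef, Finset.card_image_of_injective _ hhinj, Finset.card_univ, Fintype.card_fin]
  have hIGS' : IG ⊆ S' := by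
    intro a ha
    rw [hIGdef, Finset.mem_image] at ha
    obtain ⟨i, _, rfl⟩ := ha
    exact hgS' i
  have hIFS' : IF ⊆ S' := by
    intro a ha
    rw [hIFdef, Finset.mem_image] at ha
    obtain ⟨i, _, rfl⟩ := ha
    exact hfS' i
  have hIHS' : IH ⊆ S' := by
    intro a ha
    rw [hIHdef, Finset.mem_image] at ha
    obtain ⟨i, _, rfl⟩ := ha
    exact hhS' i
  have hdisjGF : Disjoint IG IF := by
    rw [Finset.disjoint_left]
    intro a haG haF
    rw [hIGdef, Finset.mem_image] at haG
    rw [hIFdef, Finset.mem_image] at haF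
    obtain ⟨i, _, rfl⟩ := haG
    obtain ⟨j, _, hj⟩ := haF
    exact hgf i j hj.symm
  have hdisjGH : Disjoint IG IH := by
    rw [Finset.disjoint_left]
    intro a haG haH
    rw [hIGdef, Finset.mem_image] at haG
    rw [hIHdef, Finset.mem_image] at haH
    obtain ⟨i, _, rfl⟩ := haG
    obtain ⟨j, _, hj⟩ := haH
    exact hgh i j hj.symm
  have hdisjFH : Disjoint IF IH := by
    rw [Finset.disjoint_left]
    intro a haF haH
    rw [hIFdef, Finset.mem_image] at haF
    rw [hIHdef, Finset.mem_image] at haH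
    obtain ⟨i, _, rfl⟩ := haF
    obtain ⟨j, _, hj⟩ := haH
    exact hfh i j hj.symm
  set core : Finset (EuclideanSpace ℝ (Fin 2)) := IG ∪ IF ∪ IH ∪ X with hcoredef
  have hdisjX : Disjoint (IG ∪ IF ∪ IH) X := by
    rw [Finset.disjoint_left]
    intro a ha haX
    have haS' : a ∈ S' := by
      rcases Finset.mem_union.mp ha with ha | ha
      · rcases Finset.mem_union.mp ha with ha | ha
        · exact hIGS' ha
        · exact hIFS' ha
      · exact hIHS' ha
    rw [hXdef, Finset.mem_filter] at haX
    rw [haX.2] at haS'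
    exact hxS' haS'
  have hcorecard : core.card = 3*k' + c := by
    rw [hcoredef, Finset.card_union_of_disjoint hdisjX,
      Finset.card_union_of_disjoint (Finset.disjoint_union_left.mpr ⟨hdisjGH, hdisjFH⟩),
      Finset.card_union_of_disjoint hdisjGF, hIGcard, hIFcard, hIHcard, hXcard]
    ring
  have hcoresub : core ⊆ S := by
    rw [hcoredef]
    intro a ha
    rcases Finset.mem_union.mp ha with ha | ha
    · rcases Finset.mem_union.mp ha with ha | ha
      · rcases Finset.mem_union.mp ha with ha | ha
        · exact hS'sub (hIGS' ha)
        · exact hS'sub (hIFS' ha)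
      · exact hS'sub (hIHS' ha)
    · exact Finset.filter_subset _ _ ha
  have hpadavail : 2*c ≤ (S \ core).card := by
    have e6 : (S \ core).card = n - (3*k' + c) := by
      rw [Finset.card_sdiff_of_subset hcoresub, hcorecard, hcard]
    rw [e6]
    omega
  obtain ⟨pad, hpadsub, hpadcard⟩ := Finset.exists_subset_card_eq hpadavail
  set T : Finset (EuclideanSpace ℝ (Fin 2)) := core ∪ pad with hTdef
  have hTsub : T ⊆ S := by
    rw [hTdef]
    intro a ha
    rcases Finset.mem_union.mp ha with ha | ha
    · exact hcoresub ha
    · exact (Finset.mem_sdiff.mp (hpadsub ha)).1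
  have hdisjcp : Disjoint core pad := by
    rw [Finset.disjoint_left]
    intro a ha hap
    exact (Finset.mem_sdiff.mp (hpadsub hap)).2 ha
  have hTcard : T.card = 3*k := by
    rw [hTdef, Finset.card_union_of_disjoint hdisjcp, hcorecard, hpadcard]
    omega
  -- the main depth lower bound for T
  have hforall : ∀ (u : EuclideanSpace ℝ (Fin 2)), u ≠ 0 →
      k ≤ (T.filter (fun s => 0 ≤ ⟪u, s - x⟫)).card := by
    intro u hu
    set b : ℝ := wrap (psi u - α0) with hbdef
    have hbIoc : b ∈ Set.Ioc 0 (2*π) := by rw [hbdef]; exact wrap_mem _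
    set w : Fin k' → EuclideanSpace ℝ (Fin 2) := fun i =>
      if b ≤ π then (if θ (g i) ≤ b then f i else g i)
      else (if θ (g i) ≤ b - π then g i else h i) with hwdef
    have hwcases : ∀ i, (w i = g i ∨ w i = f i ∨ w i = h i) := by
      intro i
      simp only [hwdef]
      split_ifs
      · exact Or.inr (Or.inl rfl)
      · exact Or.inl rfl
      · exact Or.inl rfl
      · exact Or.inr (Or.inr rfl)
    have hwS' : ∀ i, w i ∈ S' := by
      intro i
      rcases hwcases i with hw|hw|hw <;> rw [hw]
      · exact hgS' i
      · exact hfS' i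
      · exact hhS' i
    have hwT : ∀ i, w i ∈ T := by
      intro i
      have hIGT : IG ⊆ T := by
        rw [hTdef, hcoredef]
        intro a ha
        exact Finset.mem_union_left _ (Finset.mem_union_left _
          (Finset.mem_union_left _ (Finset.mem_union_left _ ha)))
      have hIFT : IF ⊆ T := by
        rw [hTdef, hcoredef]
        intro a ha
        exact Finset.mem_union_left _ (Finset.mem_union_left _
          (Finset.mem_union_left _ (Finset.mem_union_right _ ha)))
      have hIHT : IH ⊆ T := by
        rw [hTdef, hcoredef]
        intro a ha
        exact Finset.mem_union_left _ (Finset.mem_union_left _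
          (Finset.mem_union_right _ ha))
      rcases hwcases i with hw|hw|hw <;> rw [hw]
      · exact hIGT (by rw [hIGdef]; exact Finset.mem_image_of_mem g (Finset.mem_univ i))
      · exact hIFT (by rw [hIFdef]; exact Finset.mem_image_of_mem f (Finset.mem_univ i))
      · exact hIHT (by rw [hIHdef]; exact Finset.mem_image_of_mem h (Finset.mem_univ i))
    have hwMem : ∀ i, Mem b (θ (w i)) := by
      intro i
      have hg1 := hgθ i
      have hf1 := hfθ i
      have hh1 := hhθ i
      have hp2 := hP2 i
      have hp3 := hP3 i
      have hb0 := hbIoc.1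
      have hb2 := hbIoc.2
      simp only [hwdef]
      split_ifs with h1 h2 h3
      · exact Or.inl ⟨by linarith [hf1.1], by linarith⟩
      · push_neg at h2
        exact Or.inl ⟨h2, by linarith [hg1.2]⟩
      · exact Or.inr h3
      · push_neg at h3
        exact Or.inl ⟨by linarith, by linarith [hh1.2]⟩
    have hwinner : ∀ i, (0:ℝ) ≤ ⟪u, w i - x⟫ := by
      intro i
      rw [inner_nonneg_iff u _ hu (hsx _ (hwS' i))]
      have h1 := cos_of_mem b (θ (w i)) hbIoc (hθmem _) (hwMem i)
      obtain ⟨mb, hmb⟩ := wrap_sub (psi u - α0)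
      rw [θcos (w i) (b + π/2)] at h1
      rw [show psi (w i - x) - (α0 - π/2 + (b + π/2))
          = psi (w i - x) - psi u + mb * (2*π) from by rw [hbdef, hmb]; ring] at h1
      rwa [Real.cos_add_int_mul_two_pi] at h1
    have hwinj : ∀ i j, w i = w j → i = j := by
      intro i j hij
      rcases hwcases i with hwi|hwi|hwi <;> rcases hwcases j with hwj|hwj|hwj <;>
        rw [hwi, hwj] at hij
      · exact hginj hij
      · exact absurd hij (hgf i j)
      · exact absurd hij (hgh i j)
      · exact absurd hij.symm (hgf j i)
      · exact hfinj hij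
      · exact absurd hij (hfh i j)
      · exact absurd hij.symm (hgh j i)
      · exact absurd hij.symm (hfh j i)
      · exact hhinj hij
    have hk'count : k' ≤ ((T.filter (fun s => 0 ≤ ⟪u, s - x⟫)).erase x).card := by
      have := Finset.card_le_card_of_injOn w (s := (Finset.univ : Finset (Fin k')))
        (t := (T.filter (fun s => 0 ≤ ⟪u, s - x⟫)).erase x)
        (fun i _ => by
          rw [Finset.mem_coe, Finset.mem_erase]
          refine ⟨?_, Finset.mem_filter.mpr ⟨hwT i, hwinner i⟩⟩
          intro hwx
          apply hxS'
          rw [← hwx]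
          exact hwS' i)
        (fun i _ j _ hij => hwinj i j hij)
      simpa using this
    by_cases hx : x ∈ S
    · have hcx : c = 1 := by simp [hcdef, hx]
      have hxT : x ∈ T := by
        rw [hTdef, hcoredef]
        refine Finset.mem_union_left _ (Finset.mem_union_right _ ?_)
        rw [hXdef, Finset.mem_filter]
        exact ⟨hx, rfl⟩
      have hxfil : x ∈ T.filter (fun s => 0 ≤ ⟪u, s - x⟫) :=
        Finset.mem_filter.mpr ⟨hxT, hinnerx u⟩
      have e7 := Finset.card_erase_of_mem hxfil
      have e8 : 0 < (T.filter (fun s => 0 ≤ ⟪u, s - x⟫)).card :=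
        Finset.card_pos.mpr ⟨x, hxfil⟩
      omega
    · have hcx : c = 0 := by simp [hcdef, hx]
      have := Finset.card_erase_le (a := x) (s := T.filter (fun s => 0 ≤ ⟪u, s - x⟫))
      omega
  refine ⟨T, hTsub, hTcard, ?_, ?_⟩
  · intro u hu
    rw [hset T u]
    exact hforall u hu
  · refine ⟨u0, hu0ne, ?_⟩
    rw [hset T u0]
    refine le_antisymm ?_ (hforall u0 hu0ne)
    exact le_trans (Finset.card_le_card (Finset.filter_subset_filter _ hTsub)) (le_of_eq hSfk)
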